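/- Let n be a positive integer, x = (x_1,...,x_n) and y = (y_1,...,y_n) be n-tuples of complex numbers, p = (p_1,...,p_n) nonnegative real weights with ∑_{i=1}^n p_i = 1, and γ, Γ ∈ ℂ with Re(Γ · conj(γ)) > 0. If ∑_{i=1}^n p_i | x_i - ((γ + Γ)/2) · conj(y_i) |^2 ≤ (1/4) |Γ - γ|^2 ∑_{i=1}^n p_i |y_i|^2, then (∑_{i=1}^n p_i |x_i|^2)(∑_{i=1}^n p_i |y_i|^2) ≤ (1/4) · ( Re[ (conj(Γ) + conj(γ)) ∑_{i=1}^n p_i x_i y_i ] )^2 / Re(Γ conj(γ)) ≤ (1/4) · (|Γ + γ|^2 / Re(Γ conj(γ))) · | ∑_{i=1}^n p_i x_i y_i |^2. -/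

import Mathlib

theorem stmt_15 (n : ℕ) (hn : 0 < n) (x y : Fin n → ℂ) (p : Fin n → ℝ)
    (hp : ∀ k, 0 ≤ p k) (hp1 : ∑ i, p i = 1)
    (γ Γ : ℂ) (hΓγ : 0 < (Γ * (starRingEnd ℂ) γ).re)
    (h : ∑ i, p i * ‖x i - ((γ + Γ) / 2) * (starRingEnd ℂ) (y i)‖ ^ 2
        ≤ (1 / 4) * ‖Γ - γ‖ ^ 2 * ∑ i, p i * ‖y i‖ ^ 2) :
    (∑ i, p i * ‖x i‖ ^ 2) * (∑ i, p i * ‖y i‖ ^ 2)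
      ≤ (1 / 4) * ((((starRingEnd ℂ) Γ + (starRingEnd ℂ) γ) * ∑ i, (p i : ℂ) * x i * y i).re ^ 2
          / (Γ * (starRingEnd ℂ) γ).re)
    ∧ (1 / 4) * ((((starRingEnd ℂ) Γ + (starRingEnd ℂ) γ) * ∑ i, (p i : ℂ) * x i * y i).re ^ 2
          / (Γ * (starRingEnd ℂ) γ).re)
      ≤ (1 / 4) * (‖Γ + γ‖ ^ 2 / (Γ * (starRingEnd ℂ) γ).re)
        * ‖∑ i, (p i : ℂ) * x i * y i‖ ^ 2 := by
  set A := ∑ i, p i * ‖x i‖ ^ 2 with hA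
  set B := ∑ i, p i * ‖y i‖ ^ 2 with hB
  set S := ∑ i, (p i : ℂ) * x i * y i with hS
  set r := (Γ * (starRingEnd ℂ) γ).re with hr
  set T := (((starRingEnd ℂ) Γ + (starRingEnd ℂ) γ) * S).re with hT
  set c : ℂ := (γ + Γ) / 2 with hc
  have hA0 : 0 ≤ A := Finset.sum_nonneg fun i _ => mul_nonneg (hp i) (by positivity)
  have hB0 : 0 ≤ B := Finset.sum_nonneg fun i _ => mul_nonneg (hp i) (by positivity)
  -- T as a sum of real parts
  have hTsum : T = ∑ i, p i * (2 * ((starRingEnd ℂ) c * (x i * y i)).re) := by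
    rw [hT, hS, Finset.mul_sum, Complex.re_sum]
    apply Finset.sum_congr rfl
    intro i _
    have : ((starRingEnd ℂ) Γ + (starRingEnd ℂ) γ) * ((p i : ℂ) * x i * y i)
        = ((p i * 2 : ℝ) : ℂ) * ((starRingEnd ℂ) c * (x i * y i)) := by
      rw [hc, map_div₀, map_add]
      have h2 : (starRingEnd ℂ) (2 : ℂ) = 2 := map_ofNat _ 2
      rw [h2]; push_cast; field_simp; ring
    rw [this, Complex.re_ofReal_mul]
    ring
  -- expand the LHS of h
  have hexp : ∑ i, p i * ‖x i - c * (starRingEnd ℂ) (y i)‖ ^ 2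
      = A + Complex.normSq c * B - T := by
    rw [hTsum, hA, hB, Finset.mul_sum, ← Finset.sum_add_distrib, ← Finset.sum_sub_distrib]
    apply Finset.sum_congr rfl
    intro i _
    rw [Complex.sq_norm, Complex.normSq_sub, Complex.sq_norm, Complex.sq_norm]
    have : (x i * (starRingEnd ℂ) (c * (starRingEnd ℂ) (y i))).re
        = ((starRingEnd ℂ) c * (x i * y i)).re := by
      rw [map_mul, Complex.conj_conj]; ring_nf
    rw [this, Complex.normSq_mul, Complex.normSq_conj]
    ring
  have hnc : Complex.normSq c = r + (1/4) * ‖Γ - γ‖ ^ 2 := by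
    rw [hc, hr, Complex.sq_norm]
    simp [Complex.normSq_apply, Complex.mul_re, Complex.div_re, Complex.normSq_apply,
      Complex.add_re, Complex.add_im, Complex.sub_re, Complex.sub_im]
    ring
  have key : A + r * B ≤ T := by
    rw [hexp, hnc] at h
    nlinarith [h, hB0]
  have hT0 : 0 ≤ T := le_trans (by nlinarith) key
  constructor
  · rw [show (1:ℝ)/4 * (T^2 / r) = (1/4 * T^2) / r by ring, le_div_iff₀ hΓγ]
    have hArB : 0 ≤ A + r * B := by nlinarith [mul_nonneg hΓγ.le hB0]
    have hsq : (A + r * B) * (A + r * B) ≤ T * T := mul_self_le_mul_self hArB key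
    nlinarith [hsq, sq_nonneg (A - r * B)]
  · have h1 : |T| ≤ ‖((starRingEnd ℂ) Γ + (starRingEnd ℂ) γ) * S‖ :=
      Complex.abs_re_le_norm _
    have h2 : ‖((starRingEnd ℂ) Γ + (starRingEnd ℂ) γ) * S‖
        = ‖Γ + γ‖ * ‖S‖ := by
      rw [norm_mul, ← map_add, Complex.norm_conj]
    have key2 : T^2 ≤ ‖Γ + γ‖ ^ 2 * ‖S‖ ^ 2 := by
      have := sq_le_sq' (neg_le_of_abs_le h1) (le_of_abs_le h1)
      rw [h2] at this; nlinarith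
    rw [show (1:ℝ)/4 * (‖Γ + γ‖ ^ 2 / r) * ‖S‖ ^ 2
        = (1/4 * (‖Γ + γ‖ ^ 2 * ‖S‖ ^ 2)) / r by ring,
      show (1:ℝ)/4 * (T^2 / r) = (1/4 * T^2) / r by ring]
    rw [div_le_div_iff₀ hΓγ hΓγ]
    nlinarith [key2, hΓγ]
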